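/- Let n ≥ 2 and A ⊆ ℕ finite with 0 ∈ A, and let b(k) count A-expansions of k. Let S be the subdivision operator on sequences defined by (Sg)_k = Σ_{i∈ℤ} c_{k−n·i} g_i where cᵢ is the indicator of A, and let δ be the sequence with δ_0 = 1 and δ_k = 0 otherwise. Then for every j ≥ 1 and every 0 ≤ k ≤ nʲ − 1, b(k) = (Sʲ δ)_k. -/

import Mathlib

/-- `l` is an `A`-expansion of `k` in base `n`: all digits in `A`, nonzero leading digit,
and value `k`. The empty list is the expansion of `0`. -/
def IsExpansion (n : ℕ) (A : Finset ℕ) (k : ℕ) (l : List ℕ) : Prop :=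
  (∀ d ∈ l, d ∈ A) ∧ l.getLast? ≠ some 0 ∧ Nat.ofDigits n l = k

/-- Every nonnegative integer has at most one `A`-expansion in base `n`. -/
def UniqueExpansions (n : ℕ) (A : Finset ℕ) : Prop :=
  ∀ k : ℕ, ∀ l₁ l₂ : List ℕ, IsExpansion n A k l₁ → IsExpansion n A k l₂ → l₁ = l₂

/-- The family `f` generates a free semigroup under composition: distinct nonempty
words give distinct composed functions. Composition is left-to-right:
`[u₁,…,u_p] ↦ f u₁ ∘ ⋯ ∘ f u_p`. -/
def FreeComp {α ι : Type*} (f : ι → α → α) : Prop :=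
  ∀ w₁ w₂ : List ι, w₁ ≠ [] → w₂ ≠ [] →
    (w₁.map f).foldr (· ∘ ·) id = (w₂.map f).foldr (· ∘ ·) id → w₁ = w₂

noncomputable def bcount (n : ℕ) (A : Finset ℕ) (k : ℤ) : ℕ :=
  Set.ncard {l : List ℕ |
    (∀ d ∈ l, d ∈ A) ∧ l.getLast? ≠ some 0 ∧ (Nat.ofDigits n l : ℤ) = k}

def ind (A : Finset ℕ) (i : ℤ) : ℕ := if 0 ≤ i ∧ i.toNat ∈ A then 1 else 0

/-- The subdivision operator with the indicator sequence of `A`: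
`(S g) k = ∑ᵢ c_{k - n i} g i`. -/
noncomputable def subd (n : ℕ) (A : Finset ℕ) (g : ℤ → ℕ) : ℤ → ℕ :=
  fun k => ∑ᶠ i : ℤ, ind A (k - (n : ℤ) * i) * g i

namespace Stmt4

def E (n : ℕ) (A : Finset ℕ) (k : ℕ) : Set (List ℕ) :=
  {l | (∀ d ∈ l, d ∈ A) ∧ l.getLast? ≠ some 0 ∧ Nat.ofDigits n l = k}

lemma pow_le_ofDigits (n : ℕ) (hn : 2 ≤ n) :
    ∀ l : List ℕ, l ≠ [] → l.getLast? ≠ some 0 →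
      n ^ (l.length - 1) ≤ Nat.ofDigits n l := by
  intro l
  induction l with
  | nil => simp
  | cons d t ih =>
    intro _ hlast
    cases t with
    | nil =>
      have hd : d ≠ 0 := by
        simp only [List.getLast?_singleton, ne_eq, Option.some_inj] at hlast
        exact hlast
      simp only [Nat.ofDigits_cons, Nat.ofDigits_nil, List.length_singleton, Nat.sub_self,
        pow_zero, Nat.mul_zero, Nat.add_zero]
      omega
    | cons e s =>
      rw [List.getLast?_cons_cons] at hlast
      have h := ih (by simp) hlast
      rw [Nat.ofDigits_cons]
      have : n ^ ((d :: e :: s).length - 1) = n * n ^ ((e :: s).length - 1) := by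
        simp [List.length_cons, pow_succ]
        ring
      rw [this]
      calc n * n ^ ((e :: s).length - 1) ≤ n * Nat.ofDigits n (e :: s) :=
            Nat.mul_le_mul_left _ h
        _ ≤ d + n * Nat.ofDigits n (e :: s) := Nat.le_add_left _ _

lemma length_le (n : ℕ) (hn : 2 ≤ n) (A : Finset ℕ) (k : ℕ) {l : List ℕ}
    (hl : l ∈ E n A k) : l.length ≤ k + 1 := by
  rcases eq_or_ne l [] with rfl | hne
  · simp
  · have h := pow_le_ofDigits n hn l hne hl.2.1
    have h2 : l.length - 1 < 2 ^ (l.length - 1) := Nat.lt_two_pow_self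
    have h3 : 2 ^ (l.length - 1) ≤ n ^ (l.length - 1) := Nat.pow_le_pow_left hn _
    have := hl.2.2
    omega

lemma bounded_finite (A : Finset ℕ) :
    ∀ m : ℕ, {l : List ℕ | l.length ≤ m ∧ ∀ d ∈ l, d ∈ A}.Finite := by
  intro m
  induction m with
  | zero =>
    apply Set.Finite.subset (Set.finite_singleton ([] : List ℕ))
    rintro l ⟨h1, _⟩
    simp_all [List.length_eq_zero_iff.mp (Nat.le_zero.mp h1)]
  | succ m ih =>
    apply Set.Finite.subset
      (Set.Finite.insert [] (Set.Finite.image2 List.cons A.finite_toSet ih))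
    rintro l ⟨h1, h2⟩
    cases l with
    | nil => simp
    | cons d t =>
      right
      exact ⟨d, by simpa using h2 d (by simp), t,
        ⟨by simpa using h1, fun e he => h2 e (by simp [he])⟩, rfl⟩

lemma E_finite (n : ℕ) (hn : 2 ≤ n) (A : Finset ℕ) (k : ℕ) : (E n A k).Finite := by
  apply Set.Finite.subset (bounded_finite A (k + 1))
  intro l hl
  exact ⟨length_le n hn A k hl, hl.1⟩

lemma E_zero (n : ℕ) (hn : 2 ≤ n) (A : Finset ℕ) : E n A 0 = {([] : List ℕ)} := by
  ext l
  simp only [Set.mem_singleton_iff, E, Set.mem_setOf_eq]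
  constructor
  · rintro ⟨h1, h2, h3⟩
    induction l with
    | nil => rfl
    | cons d t ih =>
      rw [Nat.ofDigits_cons] at h3
      have hd : d = 0 := by omega
      have ht : Nat.ofDigits n t = 0 := by
        have : n * Nat.ofDigits n t = 0 := by omega
        rcases Nat.mul_eq_zero.mp this with h | h
        · omega
        · exact h
      cases t with
      | nil => simp [hd] at h2
      | cons e s =>
        rw [List.getLast?_cons_cons] at h2
        exact absurd (ih (fun e he => h1 e (by simp [he])) h2 ht) (by simp)
  · rintro rfl
    exact ⟨by simp, by simp, by simp⟩

lemma mem_E_pos (n : ℕ) (hn : 2 ≤ n) (A : Finset ℕ) (h0 : 0 ∈ A) (k : ℕ) (hk : 1 ≤ k)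
    (l : List ℕ) : l ∈ E n A k ↔
      ∃ i, i ≤ k ∧ n * i ≤ k ∧ k - n * i ∈ A ∧ ∃ t ∈ E n A i, l = (k - n * i) :: t := by
  constructor
  · rintro ⟨h1, h2, h3⟩
    cases l with
    | nil => simp at h3; omega
    | cons d t =>
      rw [Nat.ofDigits_cons] at h3
      refine ⟨Nat.ofDigits n t, by nlinarith [Nat.ofDigits n t], by omega, ?_, t, ⟨?_, ?_, rfl⟩, ?_⟩
      · have : k - n * Nat.ofDigits n t = d := by omega
        rw [this]; exact h1 d (by simp)
      · exact fun e he => h1 e (by simp [he])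
      · cases t with
        | nil => simp
        | cons e s => rw [List.getLast?_cons_cons] at h2; exact h2
      · have : k - n * Nat.ofDigits n t = d := by omega
        rw [this]
  · rintro ⟨i, hik, hni, hmem, t, ⟨ht1, ht2, ht3⟩, rfl⟩
    refine ⟨?_, ?_, ?_⟩
    · intro e he
      rcases List.mem_cons.mp he with rfl | he
      · exact hmem
      · exact ht1 e he
    · cases t with
      | nil =>
        simp only [Nat.ofDigits_nil] at ht3
        subst ht3
        simp only [List.getLast?_singleton, ne_eq, Option.some_inj]
        omega
      | cons e s => rw [List.getLast?_cons_cons]; exact ht2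
    · rw [Nat.ofDigits_cons, ht3]; omega

open Finset in
lemma ncard_rec (n : ℕ) (hn : 2 ≤ n) (A : Finset ℕ) (h0 : 0 ∈ A) (k : ℕ) (hk : 1 ≤ k) :
    (E n A k).ncard = ∑ i ∈ Finset.range (k + 1),
      (if n * i ≤ k ∧ k - n * i ∈ A then 1 else 0) * (E n A i).ncard := by
  classical
  have hfin := fun m => E_finite n hn A m
  set F : ℕ → Finset (List ℕ) := fun m => (hfin m).toFinset with hF
  set B : ℕ → Finset (List ℕ) := fun i =>
    if n * i ≤ k ∧ k - n * i ∈ A then (F i).image (List.cons (k - n * i)) else ∅ with hB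
  have hFB : F k = (Finset.range (k + 1)).biUnion B := by
    ext l
    simp only [hF, Set.Finite.mem_toFinset, Finset.mem_biUnion, Finset.mem_range]
    rw [mem_E_pos n hn A h0 k hk]
    constructor
    · rintro ⟨i, hik, hni, hmem, t, ht, rfl⟩
      refine ⟨i, by omega, ?_⟩
      simp only [hB, if_pos (And.intro hni hmem), Finset.mem_image]
      exact ⟨t, (hfin i).mem_toFinset.mpr ht, rfl⟩
    · rintro ⟨i, hik, hl⟩
      simp only [hB] at hl
      split_ifs at hl with hc
      · simp only [Finset.mem_image, Set.Finite.mem_toFinset] at hl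
        obtain ⟨t, ht, rfl⟩ := hl
        exact ⟨i, by omega, hc.1, hc.2, t, (hfin i).mem_toFinset.mp ht, rfl⟩
      · simp at hl
  have hdisj : ∀ i ∈ Finset.range (k + 1), ∀ j ∈ Finset.range (k + 1),
      i ≠ j → Disjoint (B i) (B j) := by
    intro i _ j _ hij
    rw [Finset.disjoint_left]
    intro l hli hlj
    simp only [hB] at hli hlj
    split_ifs at hli hlj
    · simp only [Finset.mem_image, Set.Finite.mem_toFinset] at hli hlj
      obtain ⟨t, ht, rfl⟩ := hli
      obtain ⟨s, hs, heq⟩ := hlj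
      injection heq with h1 h2
      subst h2
      have ht' := (hfin i).mem_toFinset.mp ht
      have hs' := (hfin j).mem_toFinset.mp hs
      exact hij (by rw [← ht'.2.2, ← hs'.2.2])
    · exact absurd hlj (Finset.notMem_empty l)
    · exact absurd hli (Finset.notMem_empty l)
    · exact absurd hli (Finset.notMem_empty l)
  have hcard : ∀ i, (B i).card =
      (if n * i ≤ k ∧ k - n * i ∈ A then 1 else 0) * (E n A i).ncard := by
    intro i
    simp only [hB]
    split_ifs with hc
    · rw [Finset.card_image_of_injective _ (fun a b h => (List.cons.injEq _ _ _ _ ▸ h).2),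
        one_mul, Set.ncard_eq_toFinset_card _ (hfin i)]
    · simp
  calc (E n A k).ncard = (F k).card := Set.ncard_eq_toFinset_card _ (hfin k)
    _ = ∑ i ∈ Finset.range (k + 1), (B i).card := by rw [hFB, Finset.card_biUnion hdisj]
    _ = _ := Finset.sum_congr rfl fun i _ => hcard i

lemma bcount_nat (n : ℕ) (A : Finset ℕ) (m : ℕ) : bcount n A (m : ℤ) = (E n A m).ncard := by
  unfold bcount E
  congr 1
  ext l
  simp only [Set.mem_setOf_eq, ← Nat.coe_ofDigits ℤ, Nat.cast_inj]

lemma bcount_neg (n : ℕ) (A : Finset ℕ) (k : ℤ) (h : k < 0) : bcount n A k = 0 := by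
  unfold bcount
  convert Set.ncard_empty (List ℕ)
  ext l
  simp only [Set.mem_setOf_eq, Set.mem_empty_iff_false, iff_false]
  rintro ⟨_, _, h3⟩
  rw [← Nat.coe_ofDigits ℤ] at h3
  have : (0 : ℤ) ≤ ((Nat.ofDigits n l : ℕ) : ℤ) := Int.natCast_nonneg _
  omega

lemma bcount_zero (n : ℕ) (hn : 2 ≤ n) (A : Finset ℕ) : bcount n A 0 = 1 := by
  have := bcount_nat n A 0
  rw [Nat.cast_zero] at this
  rw [this, E_zero n hn A, Set.ncard_singleton]

lemma bcount_nonneg_of_ne_zero (n : ℕ) (A : Finset ℕ) (i : ℤ) (h : bcount n A i ≠ 0) :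
    0 ≤ i := by
  by_contra hneg
  exact h (bcount_neg n A i (by omega))

lemma ind_ne_zero (A : Finset ℕ) {x : ℤ} (h : ind A x ≠ 0) : 0 ≤ x ∧ x.toNat ∈ A := by
  unfold ind at h
  split_ifs at h with hc
  · exact hc
  · simp at h

lemma subd_fixed (n : ℕ) (hn : 2 ≤ n) (A : Finset ℕ) (h0 : 0 ∈ A) :
    subd n A (bcount n A) = bcount n A := by
  funext k
  unfold subd
  rcases lt_trichotomy k 0 with hk | rfl | hk
  · rw [bcount_neg n A k hk]
    apply finsum_eq_zero_of_forall_eq_zero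
    intro i
    by_cases hb : bcount n A i = 0
    · simp [hb]
    by_cases hι : ind A (k - (n : ℤ) * i) = 0
    · simp [hι]
    exfalso
    have hi0 : 0 ≤ i := bcount_nonneg_of_ne_zero n A i hb
    have h1 := (ind_ne_zero A hι).1
    have hn' : (0 : ℤ) ≤ (n : ℤ) := by positivity
    nlinarith
  · rw [bcount_zero n hn A, finsum_eq_single _ (0 : ℤ) ?_]
    · simp only [mul_zero, sub_zero]
      rw [bcount_zero n hn A, ind, if_pos ⟨le_refl 0, by simpa using h0⟩]
    · intro i hi
      by_cases hb : bcount n A i = 0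
      · simp [hb]
      by_cases hι : ind A (0 - (n : ℤ) * i) = 0
      · rw [zero_sub] at hι
        simp [hι]
      exfalso
      have hi0 : 0 ≤ i := bcount_nonneg_of_ne_zero n A i hb
      have h1 := (ind_ne_zero A hι).1
      have hn' : (2 : ℤ) ≤ (n : ℤ) := by exact_mod_cast hn
      have hipos : 0 < i := lt_of_le_of_ne hi0 (Ne.symm hi)
      nlinarith
  · obtain ⟨m, rfl⟩ := Int.eq_ofNat_of_zero_le hk.le
    have hm : 1 ≤ m := by exact_mod_cast hk
    have hn' : (2 : ℤ) ≤ (n : ℤ) := by exact_mod_cast hn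
    set f : ℤ → ℕ := fun i => ind A ((m : ℤ) - (n : ℤ) * i) * bcount n A i with hf
    have hsup : Function.support f ⊆
        (((Finset.range (m + 1)).image (Nat.cast : ℕ → ℤ)) : Finset ℤ) := by
      intro i hi
      have hne : f i ≠ 0 := hi
      have hb : bcount n A i ≠ 0 := fun h => hne (by simp [hf, h])
      have hι : ind A ((m : ℤ) - (n : ℤ) * i) ≠ 0 := fun h => hne (by simp [hf, h])
      have hi0 : 0 ≤ i := bcount_nonneg_of_ne_zero n A i hb
      have h1 := (ind_ne_zero A hι).1
      have him : i ≤ (m : ℤ) := by nlinarith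
      simp only [Finset.coe_image, Set.mem_image, Finset.mem_coe, Finset.mem_range]
      exact ⟨i.toNat, by omega, by omega⟩
    rw [finsum_eq_sum_of_support_subset f hsup,
      Finset.sum_image (fun x _ y _ h => by exact_mod_cast h),
      bcount_nat n A m, ncard_rec n hn A h0 m hm]
    apply Finset.sum_congr rfl
    intro i _
    simp only [hf]
    rw [bcount_nat n A i]
    congr 1
    have hcast : (n : ℤ) * (i : ℤ) = ((n * i : ℕ) : ℤ) := by push_cast; ring
    unfold ind
    by_cases hc : n * i ≤ m ∧ m - n * i ∈ A
    · rw [if_pos hc, if_pos ?_]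
      refine ⟨by rw [hcast]; have := hc.1; omega, ?_⟩
      have : ((m : ℤ) - (n : ℤ) * (i : ℤ)).toNat = m - n * i := by rw [hcast]; omega
      rw [this]; exact hc.2
    · rw [if_neg hc, if_neg ?_]
      rintro ⟨h1, h2⟩
      apply hc
      rw [hcast] at h1 h2
      have hle : n * i ≤ m := by omega
      refine ⟨hle, ?_⟩
      have : ((m : ℤ) - ((n * i : ℕ) : ℤ)).toNat = m - n * i := by omega
      rwa [this] at h2

lemma agree_step (n : ℕ) (hn : 2 ≤ n) (A : Finset ℕ) (g h : ℤ → ℕ) (j : ℕ)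
    (hgh : ∀ i : ℤ, i ≤ (n : ℤ) ^ j - 1 → g i = h i) :
    ∀ k : ℤ, k ≤ (n : ℤ) ^ (j + 1) - 1 → subd n A g k = subd n A h k := by
  intro k hk
  unfold subd
  apply finsum_congr
  intro i
  by_cases hι : ind A (k - (n : ℤ) * i) = 0
  · simp [hι]
  · have h1 := (ind_ne_zero A hι).1
    have hn' : (2 : ℤ) ≤ (n : ℤ) := by exact_mod_cast hn
    have hpow : (n : ℤ) ^ (j + 1) = (n : ℤ) * (n : ℤ) ^ j := by ring
    have hlt : (n : ℤ) * i < (n : ℤ) * (n : ℤ) ^ j := by omega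
    have hij : i < (n : ℤ) ^ j := lt_of_mul_lt_mul_left hlt (by positivity)
    rw [hgh i (by omega)]

end Stmt4

theorem stmt4 (n : ℕ) (hn : 2 ≤ n) (A : Finset ℕ) (h0 : 0 ∈ A)
    (j : ℕ) (hj : 1 ≤ j) (k : ℤ) (hk0 : 0 ≤ k) (hk : k ≤ (n : ℤ) ^ j - 1) :
    bcount n A k = (subd n A)^[j] (fun i => if i = 0 then 1 else 0) k := by
  have key : ∀ j : ℕ, ∀ i : ℤ, i ≤ (n : ℤ) ^ j - 1 →
      (subd n A)^[j] (fun i => if i = 0 then 1 else 0) i = bcount n A i := by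
    intro j
    induction j with
    | zero =>
      intro i hi
      simp only [pow_zero] at hi
      simp only [Function.iterate_zero, id_eq]
      rcases eq_or_lt_of_le hi with h | h
      · have h0' : i = 0 := by omega
        rw [if_pos h0', h0', Stmt4.bcount_zero n hn A]
      · rw [if_neg (by omega), Stmt4.bcount_neg n A i (by omega)]
    | succ j ih =>
      intro i hi
      rw [Function.iterate_succ_apply',
        Stmt4.agree_step n hn A _ (bcount n A) j ih i hi,
        Stmt4.subd_fixed n hn A h0]
  exact (key j k hk).symm
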